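/- arXiv:2101.06546 — 3 statements merged into one kernel-verified Lean document; each statement's English description precedes it below -/
import Mathlib

section
/- Let T be a tree in family F built by operations O1 and O2, and let P(T) = { N[v] : v ∈ LV(T) }. Then P(T) is a partition of V(T) into closed neighborhoods of vertices of LV(T), and every restrained Italian dominating function f of T satisfies Σ_{x ∈ N[v]} f(x) ≥ 2 for each v ∈ LV(T); hence γ_{rI}(T) ≥ 2|LV(T)|. -/
open SimpleGraph Finset

/-- D is a restrained dominating set of the graph G restricted to vertex set vs. -/
def IsRDSOn (G : SimpleGraph ℕ) (vs D : Finset ℕ) : Prop :=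
  D ⊆ vs ∧ ∀ v ∈ vs, v ∉ D → (∃ u ∈ D, G.Adj v u) ∧ ∃ u ∈ vs, u ∉ D ∧ G.Adj v u

/-- The restrained domination number of G on vertex set vs. -/
noncomputable def rdnOn (G : SimpleGraph ℕ) (vs : Finset ℕ) : ℕ :=
  sInf {n | ∃ D : Finset ℕ, IsRDSOn G vs D ∧ D.card = n}

open Classical in
/-- f is a restrained Italian dominating function of G on vertex set vs. -/
def IsRIDFOn (G : SimpleGraph ℕ) (vs : Finset ℕ) (f : ℕ → ℕ) : Prop :=
  (∀ v ∈ vs, f v ≤ 2) ∧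
  (∀ v ∈ vs, f v = 0 → 2 ≤ ∑ u ∈ vs.filter (fun u => G.Adj v u), f u) ∧
  (∀ v ∈ vs, f v = 0 → ∃ u ∈ vs, G.Adj v u ∧ f u = 0)

/-- The restrained Italian domination number of G on vertex set vs. -/
noncomputable def ridnOn (G : SimpleGraph ℕ) (vs : Finset ℕ) : ℕ :=
  sInf {n | ∃ f : ℕ → ℕ, IsRIDFOn G vs f ∧ ∑ v ∈ vs, f v = n}

/-- The family 𝓕 of trees built from P₄ by operations O1 (attach an end-vertex of a new
P₃ to a vertex of LV) and O2 (attach the center of a new healthy spider S_{t,t} to a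
vertex of LV).  `InF G vs lv` means: the graph G with vertex set vs is in the family,
with lv the set LV of vertices that were leaves at some stage of the construction. -/
inductive InF : SimpleGraph ℕ → Finset ℕ → Finset ℕ → Prop where
  | base (a b c d : ℕ) (hab : a ≠ b) (hac : a ≠ c) (had : a ≠ d) (hbc : b ≠ c)
      (hbd : b ≠ d) (hcd : c ≠ d) :
      InF (SimpleGraph.fromEdgeSet {s(a, b), s(b, c), s(c, d)}) {a, b, c, d} {a, d}
  | o1 (G : SimpleGraph ℕ) (vs lv : Finset ℕ) (x u v w : ℕ) (hG : InF G vs lv)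
      (hx : x ∈ lv) (hu : u ∉ vs) (hv : v ∉ vs) (hw : w ∉ vs)
      (huv : u ≠ v) (huw : u ≠ w) (hvw : v ≠ w) :
      InF (G ⊔ SimpleGraph.fromEdgeSet {s(x, u), s(u, v), s(v, w)})
        (vs ∪ {u, v, w}) (lv ∪ {w})
  | o2 (G : SimpleGraph ℕ) (vs lv : Finset ℕ) (x : ℕ) (t : ℕ) (u : ℕ)
      (mid lf : Fin t → ℕ) (ht : 1 ≤ t) (hG : InF G vs lv) (hx : x ∈ lv)
      (hu : u ∉ vs) (hmid : ∀ i, mid i ∉ vs) (hlf : ∀ i, lf i ∉ vs)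
      (hinj : Function.Injective
        (fun p : Fin t ⊕ Fin t ⊕ Unit => Sum.elim mid (Sum.elim lf fun _ => u) p)) :
      InF (G ⊔ SimpleGraph.fromEdgeSet
          (({s(x, u)} : Set (Sym2 ℕ)) ∪ ⋃ i : Fin t, {s(u, mid i), s(mid i, lf i)}))
        (vs ∪ ({u} ∪ Finset.image mid Finset.univ ∪ Finset.image lf Finset.univ))
        (lv ∪ Finset.image lf Finset.univ)

open Classical in
def Good (G : SimpleGraph ℕ) (vs lv : Finset ℕ) : Prop :=
  (∀ a b, G.Adj a b → a ∈ vs ∧ b ∈ vs) ∧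
  lv ⊆ vs ∧
  (∀ v ∈ vs, ∃! w, w ∈ lv ∧ (v = w ∨ G.Adj w v)) ∧
  (∀ w ∈ lv, ∃ s c, s ∈ vs ∧ c ∈ vs ∧ c ≠ w ∧ s ∉ lv ∧
      ∀ y, G.Adj s y ↔ (y = w ∨ y = c))

set_option maxHeartbeats 1000000 in
lemma good_base (a b c d : ℕ) (hab : a ≠ b) (hac : a ≠ c) (had : a ≠ d) (hbc : b ≠ c)
    (hbd : b ≠ d) (hcd : c ≠ d) :
    Good (SimpleGraph.fromEdgeSet {s(a, b), s(b, c), s(c, d)}) {a, b, c, d} {a, d} := by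
    have hB : ∀ p q, (SimpleGraph.fromEdgeSet {s(a,b), s(b,c), s(c,d)}).Adj p q ↔
        ((p=a∧q=b)∨(p=b∧q=a)∨(p=b∧q=c)∨(p=c∧q=b)∨(p=c∧q=d)∨(p=d∧q=c)) := by
      intro p q
      rw [SimpleGraph.fromEdgeSet_adj]
      simp only [Set.mem_insert_iff, Set.mem_singleton_iff, Sym2.eq_iff]
      constructor
      · rintro ⟨h, -⟩; tauto
      · rintro (⟨rfl,rfl⟩|⟨rfl,rfl⟩|⟨rfl,rfl⟩|⟨rfl,rfl⟩|⟨rfl,rfl⟩|⟨rfl,rfl⟩) <;>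
          exact ⟨by tauto, by omega⟩
    refine ⟨?_, ?_, ?_, ?_⟩
    · intro p q hpq
      rw [hB] at hpq
      simp only [Finset.mem_insert, Finset.mem_singleton]
      omega
    · intro z hz
      simp only [Finset.mem_insert, Finset.mem_singleton] at hz ⊢
      omega
    · intro p hp
      simp only [Finset.mem_insert, Finset.mem_singleton] at hp
      have hcover : p = a ∨ p = b ∨ p = c ∨ p = d := hp
      by_cases hpa : p = a ∨ p = b
      · refine ⟨a, ⟨by simp, ?_⟩, ?_⟩
        · rw [hB]; omega
        · rintro y ⟨hy, hy2⟩
          simp only [Finset.mem_insert, Finset.mem_singleton] at hy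
          rw [hB] at hy2
          omega
      · refine ⟨d, ⟨by simp, ?_⟩, ?_⟩
        · rw [hB]; omega
        · rintro y ⟨hy, hy2⟩
          simp only [Finset.mem_insert, Finset.mem_singleton] at hy
          rw [hB] at hy2
          omega
    · intro w0 hw0
      simp only [Finset.mem_insert, Finset.mem_singleton] at hw0
      rcases hw0 with rfl|rfl
      · refine ⟨b, c, by simp, by simp, Ne.symm hac, ?_, ?_⟩
        · simp only [Finset.mem_insert, Finset.mem_singleton]; omega
        · intro y; rw [hB]; omega
      · refine ⟨c, b, by simp, by simp, hbd, ?_, ?_⟩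
        · simp only [Finset.mem_insert, Finset.mem_singleton]; omega
        · intro y; rw [hB]; omega

set_option maxHeartbeats 1000000 in
lemma good_o1 (G : SimpleGraph ℕ) (vs lv : Finset ℕ) (x u v w : ℕ)
    (hx : x ∈ lv) (hu : u ∉ vs) (hv : v ∉ vs) (hw : w ∉ vs)
    (huv : u ≠ v) (huw : u ≠ w) (hvw : v ≠ w) (ih : Good G vs lv) :
    Good (G ⊔ SimpleGraph.fromEdgeSet {s(x, u), s(u, v), s(v, w)})
      (vs ∪ {u, v, w}) (lv ∪ {w}) := by
  obtain ⟨h1, h2, h3, h4⟩ := ih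
  have hxvs : x ∈ vs := h2 hx
  have hfr : ∀ z ∈ vs, z ≠ u ∧ z ≠ v ∧ z ≠ w := fun z hz =>
    ⟨fun e => hu (e ▸ hz), fun e => hv (e ▸ hz), fun e => hw (e ▸ hz)⟩
  have hA : ∀ p q, (G ⊔ SimpleGraph.fromEdgeSet {s(x, u), s(u, v), s(v, w)}).Adj p q ↔
      G.Adj p q ∨ ((p=x∧q=u)∨(p=u∧q=x)∨(p=u∧q=v)∨(p=v∧q=u)∨(p=v∧q=w)∨(p=w∧q=v)) := by
    intro p q
    rw [SimpleGraph.sup_adj, SimpleGraph.fromEdgeSet_adj]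
    simp only [Set.mem_insert_iff, Set.mem_singleton_iff, Sym2.eq_iff]
    constructor
    · rintro (h | ⟨h, -⟩)
      · exact Or.inl h
      · exact Or.inr (by tauto)
    · rintro (h | h)
      · exact Or.inl h
      · refine Or.inr ⟨by tauto, ?_⟩
        have hxu : x ≠ u := (hfr x hxvs).1
        have hxv : x ≠ v := (hfr x hxvs).2.1
        omega
  have hwx : w ≠ x := fun e => hw (e ▸ hxvs)
  refine ⟨?_, ?_, ?_, ?_⟩
  · intro p q hpq
    rw [hA] at hpq
    simp only [Finset.mem_union, Finset.mem_insert, Finset.mem_singleton]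
    rcases hpq with h|h
    · obtain ⟨hp, hq⟩ := h1 p q h; exact ⟨Or.inl hp, Or.inl hq⟩
    · rcases h with ⟨rfl,rfl⟩|⟨rfl,rfl⟩|⟨rfl,rfl⟩|⟨rfl,rfl⟩|⟨rfl,rfl⟩|⟨rfl,rfl⟩ <;>
        simp [hxvs]
  · intro z hz
    simp only [Finset.mem_union, Finset.mem_insert, Finset.mem_singleton] at hz ⊢
    rcases hz with hz|rfl
    · exact Or.inl (h2 hz)
    · exact Or.inr (Or.inr (Or.inr rfl))
  · intro p hp
    rcases Finset.mem_union.1 hp with hp|hp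
    · obtain ⟨y, ⟨hy, hy2⟩, huniq⟩ := h3 p hp
      refine ⟨y, ⟨Finset.mem_union_left _ hy, ?_⟩, ?_⟩
      · rcases hy2 with rfl|hadj
        · exact Or.inl rfl
        · exact Or.inr ((hA y p).2 (Or.inl hadj))
      · rintro z ⟨hz, hz2⟩
        rcases Finset.mem_union.1 hz with hz|hz
        · apply huniq
          refine ⟨hz, ?_⟩
          rcases hz2 with rfl|hadj
          · exact Or.inl rfl
          · rw [hA] at hadj
            rcases hadj with h|h
            · exact Or.inr h
            · exfalso
              have hzvs := h2 hz
              obtain ⟨hpu,hpv,hpw⟩ := hfr p hp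
              obtain ⟨hzu,hzv,hzw⟩ := hfr z hzvs
              omega
        · exfalso
          have hzw : z = w := Finset.mem_singleton.1 hz
          rcases hz2 with he|hadj
          · exact hw (hzw ▸ he ▸ hp)
          · rw [hA] at hadj
            rcases hadj with h|h
            · exact hw (hzw ▸ (h1 _ _ h).1)
            · obtain ⟨hpu,hpv,hpw⟩ := hfr p hp
              omega
    · simp only [Finset.mem_insert, Finset.mem_singleton] at hp
      have hng : ∀ z y, z ∉ vs → ¬ G.Adj z y := fun z y hzn ha => hzn (h1 z y ha).1
      have hng' : ∀ z y, z ∉ vs → ¬ G.Adj y z := fun z y hzn ha => hzn (h1 y z ha).2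
      rcases hp with hp|hp|hp
      · -- p = u, class x
        refine ⟨x, ⟨Finset.mem_union_left _ hx, Or.inr ((hA x p).2 (Or.inr (by omega)))⟩, ?_⟩
        rintro z ⟨hz, hz2⟩
        rcases Finset.mem_union.1 hz with hz|hz
        · have hzvs := h2 hz
          obtain ⟨hzu,hzv,hzw⟩ := hfr z hzvs
          rcases hz2 with he|hadj
          · omega
          · rw [hA] at hadj
            rcases hadj with h|h
            · exact absurd ((h1 z p h).2) (by rw [hp]; exact hu)
            · omega
        · have hzw : z = w := Finset.mem_singleton.1 hz
          rcases hz2 with he|hadj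
          · omega
          · rw [hA] at hadj
            rcases hadj with h|h
            · exact absurd ((h1 z p h).1) (by rw [hzw]; exact hw)
            · omega
      · -- p = v, class w
        refine ⟨w, ⟨Finset.mem_union_right _ (by simp), Or.inr ((hA w p).2 (Or.inr (by omega)))⟩, ?_⟩
        rintro z ⟨hz, hz2⟩
        rcases Finset.mem_union.1 hz with hz|hz
        · have hzvs := h2 hz
          obtain ⟨hzu,hzv,hzw⟩ := hfr z hzvs
          rcases hz2 with he|hadj
          · omega
          · rw [hA] at hadj
            rcases hadj with h|h
            · exact absurd ((h1 z p h).2) (by rw [hp]; exact hv)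
            · omega
        · exact Finset.mem_singleton.1 hz
      · -- p = w, class w
        refine ⟨w, ⟨Finset.mem_union_right _ (by simp), Or.inl hp⟩, ?_⟩
        rintro z ⟨hz, hz2⟩
        rcases Finset.mem_union.1 hz with hz|hz
        · have hzvs := h2 hz
          obtain ⟨hzu,hzv,hzw⟩ := hfr z hzvs
          rcases hz2 with he|hadj
          · omega
          · rw [hA] at hadj
            rcases hadj with h|h
            · exact absurd ((h1 z p h).2) (by rw [hp]; exact hw)
            · omega
        · exact Finset.mem_singleton.1 hz
  · intro w0 hw0
    rcases Finset.mem_union.1 hw0 with hw0|hw0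
    · obtain ⟨s, c, hs, hc, hcw, hslv, hsad⟩ := h4 w0 hw0
      have hsx : s ≠ x := fun e => hslv (e ▸ hx)
      obtain ⟨hsu,hsv,hsw⟩ := hfr s hs
      refine ⟨s, c, Finset.mem_union_left _ hs, Finset.mem_union_left _ hc, hcw, ?_, ?_⟩
      · simp only [Finset.mem_union, Finset.mem_singleton]
        rintro (h|h)
        · exact hslv h
        · exact hsw h
      · intro y
        rw [hA, hsad]
        omega
    · have : w0 = w := Finset.mem_singleton.1 hw0
      subst this
      have hvx : v ≠ x := fun e => hv (e ▸ hxvs)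
      refine ⟨v, u, Finset.mem_union_right _ (by simp), Finset.mem_union_right _ (by simp),
        huw, ?_, ?_⟩
      · simp only [Finset.mem_union, Finset.mem_singleton]
        rintro (h|h)
        · exact hv (h2 h)
        · exact hvw h
      · intro y
        rw [hA]
        constructor
        · rintro (hadj|h)
          · exact absurd (h1 v y hadj).1 hv
          · omega
        · rintro (rfl|rfl)
          · exact Or.inr (by tauto)
          · exact Or.inr (by tauto)

set_option maxHeartbeats 1000000 in
lemma good_o2 (G : SimpleGraph ℕ) (vs lv : Finset ℕ) (x : ℕ) (t : ℕ) (u : ℕ)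
    (mid lf : Fin t → ℕ) (ht : 1 ≤ t) (hx : x ∈ lv)
    (hu : u ∉ vs) (hmid : ∀ i, mid i ∉ vs) (hlf : ∀ i, lf i ∉ vs)
    (hinj : Function.Injective
      (fun p : Fin t ⊕ Fin t ⊕ Unit => Sum.elim mid (Sum.elim lf fun _ => u) p))
    (ih : Good G vs lv) :
    Good (G ⊔ SimpleGraph.fromEdgeSet
        (({s(x, u)} : Set (Sym2 ℕ)) ∪ ⋃ i : Fin t, {s(u, mid i), s(mid i, lf i)}))
      (vs ∪ ({u} ∪ Finset.image mid Finset.univ ∪ Finset.image lf Finset.univ))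
      (lv ∪ Finset.image lf Finset.univ) := by
  obtain ⟨h1, h2, h3, h4⟩ := ih
  have hxvs : x ∈ vs := h2 hx
  have hmm : ∀ i j, mid i = mid j → i = j := by
    intro i j e
    have := @hinj (Sum.inl i) (Sum.inl j) e
    simpa using this
  have hll : ∀ i j, lf i = lf j → i = j := by
    intro i j e
    have := @hinj (Sum.inr (Sum.inl i)) (Sum.inr (Sum.inl j)) e
    simpa using this
  have hml : ∀ i j, mid i ≠ lf j := by
    intro i j e
    have := @hinj (Sum.inl i) (Sum.inr (Sum.inl j)) e
    simp at this
  have hmu : ∀ i, mid i ≠ u := by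
    intro i e
    have := @hinj (Sum.inl i) (Sum.inr (Sum.inr ())) e
    simp at this
  have hlu : ∀ i, lf i ≠ u := by
    intro i e
    have := @hinj (Sum.inr (Sum.inl i)) (Sum.inr (Sum.inr ())) e
    simp at this
  have hfr : ∀ z ∈ vs, z ≠ u ∧ (∀ i, z ≠ mid i) ∧ (∀ i, z ≠ lf i) := fun z hz =>
    ⟨fun e => hu (e ▸ hz), fun i e => hmid i (e ▸ hz), fun i e => hlf i (e ▸ hz)⟩
  have hxu : x ≠ u := (hfr x hxvs).1
  have hmx : ∀ i, mid i ≠ x := fun i e => hmid i (e ▸ hxvs)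
  have hlx : ∀ i, lf i ≠ x := fun i e => hlf i (e ▸ hxvs)
  have hA : ∀ p q, (G ⊔ SimpleGraph.fromEdgeSet
      (({s(x, u)} : Set (Sym2 ℕ)) ∪ ⋃ i : Fin t, {s(u, mid i), s(mid i, lf i)})).Adj p q ↔
      G.Adj p q ∨ (p = x ∧ q = u ∨ p = u ∧ q = x ∨
        ∃ i, (p = u ∧ q = mid i ∨ p = mid i ∧ q = u ∨
          p = mid i ∧ q = lf i ∨ p = lf i ∧ q = mid i)) := by
    intro p q
    rw [SimpleGraph.sup_adj, SimpleGraph.fromEdgeSet_adj]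
    simp only [Set.mem_union, Set.mem_singleton_iff, Set.mem_iUnion, Set.mem_insert_iff,
      Sym2.eq_iff]
    constructor
    · rintro (h | ⟨h, -⟩)
      · exact Or.inl h
      · right
        rcases h with h | ⟨i, h⟩
        · tauto
        · refine Or.inr (Or.inr ⟨i, ?_⟩)
          tauto
    · rintro (h | h)
      · exact Or.inl h
      · refine Or.inr ⟨?_, ?_⟩
        · rcases h with h|h|⟨i,h⟩
          · exact Or.inl (Or.inl h)
          · exact Or.inl (Or.inr h)
          · refine Or.inr ⟨i, ?_⟩
            tauto
        · rcases h with h|h|⟨i,h⟩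
          · omega
          · omega
          · have e1 := hmu i
            have e2 := hml i i
            omega
  refine ⟨?_, ?_, ?_, ?_⟩
  · intro p q hpq
    rw [hA] at hpq
    rcases hpq with h|h
    · obtain ⟨hp, hq⟩ := h1 p q h
      exact ⟨Finset.mem_union_left _ hp, Finset.mem_union_left _ hq⟩
    · rcases h with ⟨rfl,rfl⟩|⟨rfl,rfl⟩|⟨i,(⟨rfl,rfl⟩|⟨rfl,rfl⟩|⟨rfl,rfl⟩|⟨rfl,rfl⟩)⟩ <;>
        refine ⟨by simp [hxvs], by simp [hxvs]⟩
  · intro z hz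
    rcases Finset.mem_union.1 hz with hz|hz
    · exact Finset.mem_union_left _ (h2 hz)
    · exact Finset.mem_union_right _ (Finset.mem_union_right _ hz)
  · intro p hp
    rcases Finset.mem_union.1 hp with hp|hp
    · obtain ⟨y, ⟨hy, hy2⟩, huniq⟩ := h3 p hp
      obtain ⟨hpu, hpm, hpl⟩ := hfr p hp
      refine ⟨y, ⟨Finset.mem_union_left _ hy, ?_⟩, ?_⟩
      · rcases hy2 with rfl|hadj
        · exact Or.inl rfl
        · exact Or.inr ((hA y p).2 (Or.inl hadj))
      · rintro z ⟨hz, hz2⟩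
        rcases Finset.mem_union.1 hz with hz|hz
        · apply huniq
          refine ⟨hz, ?_⟩
          rcases hz2 with rfl|hadj
          · exact Or.inl rfl
          · rw [hA] at hadj
            rcases hadj with h|h
            · exact Or.inr h
            · exfalso
              have hzvs := h2 hz
              obtain ⟨hzu, hzm, hzl⟩ := hfr z hzvs
              rcases h with h|h|⟨i,h⟩
              · omega
              · omega
              · have e1 := hzm i
                have e2 := hzl i
                have e3 := hpm i
                have e4 := hpl i
                omega
        · exfalso
          obtain ⟨j, -, hj⟩ := Finset.mem_image.1 hz
          rcases hz2 with he|hadj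
          · exact hlf j (hj ▸ he ▸ hp)
          · rw [hA] at hadj
            rcases hadj with h|h
            · exact hlf j (hj ▸ (h1 _ _ h).1)
            · have e0 := hlx j
              have e1 := hlu j
              rcases h with h|h|⟨i,h⟩
              · omega
              · omega
              · have e2 := hml i j
                have e3 := hpm i
                have e4 := hll i j
                have e5 := hpu
                omega
    · rcases Finset.mem_union.1 hp with hp|hp
      · rcases Finset.mem_union.1 hp with hp|hp
        · -- p = u, class x
          have hp : p = u := Finset.mem_singleton.1 hp
          refine ⟨x, ⟨Finset.mem_union_left _ hx, Or.inr ((hA x p).2 (Or.inr (Or.inl ⟨rfl, hp⟩)))⟩, ?_⟩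
          rintro z ⟨hz, hz2⟩
          rcases Finset.mem_union.1 hz with hz|hz
          · have hzvs := h2 hz
            obtain ⟨hzu, hzm, hzl⟩ := hfr z hzvs
            rcases hz2 with he|hadj
            · omega
            · rw [hA] at hadj
              rcases hadj with h|h
              · exact absurd ((h1 z p h).2) (by rw [hp]; exact hu)
              · rcases h with h|h|⟨i,h⟩
                · omega
                · omega
                · have e1 := hzm i
                  have e2 := hzl i
                  have e3 := hmu i
                  omega
          · exfalso
            obtain ⟨j, -, hj⟩ := Finset.mem_image.1 hz
            have e0 := hlx j
            have e1 := hlu j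
            rcases hz2 with he|hadj
            · omega
            · rw [hA] at hadj
              rcases hadj with h|h
              · exact hlf j (hj ▸ (h1 _ _ h).1)
              · rcases h with h|h|⟨i,h⟩
                · omega
                · omega
                · have e2 := hml i j
                  have e3 := hmu i
                  have e4 := hlu i
                  omega
        · -- p = mid i0, class lf i0
          obtain ⟨i0, -, hp⟩ := Finset.mem_image.1 hp
          refine ⟨lf i0, ⟨Finset.mem_union_right _ (Finset.mem_image.2 ⟨i0, Finset.mem_univ _, rfl⟩),
            Or.inr ((hA (lf i0) p).2 (Or.inr (Or.inr (Or.inr ⟨i0, Or.inr (Or.inr (Or.inr ⟨rfl, hp.symm⟩))⟩))))⟩, ?_⟩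
          rintro z ⟨hz, hz2⟩
          rcases Finset.mem_union.1 hz with hz|hz
          · exfalso
            have hzvs := h2 hz
            obtain ⟨hzu, hzm, hzl⟩ := hfr z hzvs
            have e0 := hzm i0
            rcases hz2 with he|hadj
            · omega
            · rw [hA] at hadj
              rcases hadj with h|h
              · exact hmid i0 (hp ▸ (h1 _ _ h).2)
              · have e1 := hmu i0
                rcases h with h|h|⟨i,h⟩
                · omega
                · omega
                · have e2 := hzm i
                  have e3 := hzl i
                  have e4 := hzu
                  omega
          · obtain ⟨j, -, hj⟩ := Finset.mem_image.1 hz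
            have e0 := hlx j
            have e1 := hlu j
            have e2 := hml i0 j
            rcases hz2 with he|hadj
            · omega
            · rw [hA] at hadj
              rcases hadj with h|h
              · exact absurd ((h1 z p h).1) (by rw [← hj]; exact hlf j)
              · rcases h with h|h|⟨i,h⟩
                · omega
                · omega
                · rcases h with h|h|h|h
                  · omega
                  · have e3 := hml i j
                    omega
                  · have e3 := hml i j
                    omega
                  · -- z = lf i, p = mid i, p = mid i0 → i = i0, z = lf j → goal z = lf i0
                    have hii : i = i0 := hmm i i0 (by omega)
                    have hji : j = i := hll j i (hj.trans h.1)
                    rw [← hj, hji, hii]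
      · -- p = lf i0, class lf i0
        obtain ⟨i0, -, hp⟩ := Finset.mem_image.1 hp
        refine ⟨lf i0, ⟨Finset.mem_union_right _ (Finset.mem_image.2 ⟨i0, Finset.mem_univ _, rfl⟩),
          Or.inl hp.symm⟩, ?_⟩
        rintro z ⟨hz, hz2⟩
        rcases Finset.mem_union.1 hz with hz|hz
        · exfalso
          have hzvs := h2 hz
          obtain ⟨hzu, hzm, hzl⟩ := hfr z hzvs
          have e0 := hzl i0
          have e1 := hlu i0
          have e2 := hlx i0
          rcases hz2 with he|hadj
          · omega
          · rw [hA] at hadj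
            rcases hadj with h|h
            · exact hlf i0 (hp ▸ (h1 _ _ h).2)
            · rcases h with h|h|⟨i,h⟩
              · omega
              · omega
              · have e3 := hzm i
                have e4 := hzl i
                have e5 := hml i i0
                omega
        · obtain ⟨j, -, hj⟩ := Finset.mem_image.1 hz
          rcases hz2 with he|hadj
          · rw [← hj]
            omega
          · exfalso
            rw [hA] at hadj
            rcases hadj with h|h
            · exact absurd ((h1 z p h).1) (by rw [← hj]; exact hlf j)
            · have e0 := hlx j
              have e1 := hlu j
              have e2 := hlu i0
              rcases h with h|h|⟨i,h⟩
              · omega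
              · omega
              · have e3 := hml i j
                have e4 := hml i i0
                omega
  · intro w0 hw0
    rcases Finset.mem_union.1 hw0 with hw0|hw0
    · obtain ⟨s, c, hs, hc, hcw, hslv, hsad⟩ := h4 w0 hw0
      have hsx : s ≠ x := fun e => hslv (e ▸ hx)
      obtain ⟨hsu, hsm, hsl⟩ := hfr s hs
      refine ⟨s, c, Finset.mem_union_left _ hs, Finset.mem_union_left _ hc, hcw, ?_, ?_⟩
      · intro hmem
        rcases Finset.mem_union.1 hmem with h|h
        · exact hslv h
        · obtain ⟨j, -, hj⟩ := Finset.mem_image.1 h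
          exact hsl j hj.symm
      · intro y
        rw [hA, hsad]
        constructor
        · rintro (h|h)
          · exact h
          · exfalso
            rcases h with h|h|⟨i,h⟩
            · exact hsx h.1
            · exact hsu h.1
            · have e1 := hsm i
              have e2 := hsl i
              omega
        · exact Or.inl
    · obtain ⟨i0, -, rfl⟩ := Finset.mem_image.1 hw0
      refine ⟨mid i0, u, Finset.mem_union_right _ (Finset.mem_union_left _
          (Finset.mem_union_right _ (Finset.mem_image.2 ⟨i0, Finset.mem_univ _, rfl⟩))),
        Finset.mem_union_right _ (Finset.mem_union_left _ (Finset.mem_union_left _ (by simp))),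
        fun e => hlu i0 e.symm, ?_, ?_⟩
      · intro hmem
        rcases Finset.mem_union.1 hmem with h|h
        · exact hmid i0 (h2 h)
        · obtain ⟨j, -, hj⟩ := Finset.mem_image.1 h
          exact hml i0 j hj.symm
      · intro y
        rw [hA]
        constructor
        · rintro (h|h)
          · exact absurd ((h1 _ _ h).1) (hmid i0)
          · rcases h with h|h|⟨i,h⟩
            · exact absurd h.1 (hmx i0)
            · exact absurd h.1 (hmu i0)
            · rcases h with h|h|h|h
              · exact absurd h.1.symm (hmu i0).symm
              · exact Or.inr h.2
              · have : i0 = i := hmm i0 i h.1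
                exact Or.inl (by rw [h.2, ← this])
              · exact absurd h.1 (hml i0 i)
        · rintro (rfl|rfl)
          · exact Or.inr (Or.inr (Or.inr ⟨i0, Or.inr (Or.inr (Or.inl ⟨rfl, rfl⟩))⟩))
          · exact Or.inr (Or.inr (Or.inr ⟨i0, Or.inr (Or.inl ⟨rfl, rfl⟩)⟩))

lemma good_of_inF {G : SimpleGraph ℕ} {vs lv : Finset ℕ} (h : InF G vs lv) :
    Good G vs lv := by
  induction h with
  | base a b c d hab hac had hbc hbd hcd => exact good_base a b c d hab hac had hbc hbd hcd
  | o1 G vs lv x u v w hG hx hu hv hw huv huw hvw ih =>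
    exact good_o1 G vs lv x u v w hx hu hv hw huv huw hvw ih
  | o2 G vs lv x t u mid lf ht hG hx hu hmid hlf hinj ih =>
    exact good_o2 G vs lv x t u mid lf ht hx hu hmid hlf hinj ih

open Classical in
lemma good_sum {G : SimpleGraph ℕ} {vs lv : Finset ℕ} (hg : Good G vs lv)
    (f : ℕ → ℕ) (hf : IsRIDFOn G vs f) :
    ∀ w ∈ lv, 2 ≤ f w + ∑ u ∈ vs.filter (fun u => G.Adj w u), f u := by
  obtain ⟨h1, h2, h3, h4⟩ := hg
  obtain ⟨hf1, hf2, hf3⟩ := hf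
  intro w hw
  rcases Nat.lt_or_ge (f w) 2 with hfw | hfw
  · rcases Nat.lt_or_ge (f w) 1 with hfw0 | hfw1
    · have : f w = 0 := by omega
      have := hf2 w (h2 hw) this
      omega
    · -- f w = 1
      have hfw1 : f w = 1 := by omega
      by_contra hcon
      push_neg at hcon
      have hsum0 : ∑ u ∈ vs.filter (fun u => G.Adj w u), f u = 0 := by omega
      obtain ⟨s, c, hs, hc, hcw, hslv, hsadj⟩ := h4 w hw
      have hsw : G.Adj s w := (hsadj w).2 (Or.inl rfl)
      have hsmem : s ∈ vs.filter (fun u => G.Adj w u) :=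
        Finset.mem_filter.2 ⟨hs, hsw.symm⟩
      have hfs : f s = 0 :=
        (Finset.sum_eq_zero_iff).1 hsum0 s hsmem
      have hfilter : vs.filter (fun u => G.Adj s u) = {w, c} := by
        ext y
        simp only [Finset.mem_filter, Finset.mem_insert, Finset.mem_singleton, hsadj y]
        constructor
        · rintro ⟨-, h⟩; exact h
        · rintro (rfl | rfl)
          · exact ⟨h2 hw, Or.inl rfl⟩
          · exact ⟨hc, Or.inr rfl⟩
      have hita := hf2 s hs hfs
      rw [hfilter, Finset.sum_pair (Ne.symm hcw)] at hita
      obtain ⟨y, hy, hys, hfy⟩ := hf3 s hs hfs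
      rcases (hsadj y).1 hys with rfl | rfl
      · omega
      · omega
  · omega

lemma good_bound {G : SimpleGraph ℕ} {vs lv : Finset ℕ} (hg : Good G vs lv)
    (f : ℕ → ℕ) (hf : IsRIDFOn G vs f) :
    2 * lv.card ≤ ∑ v ∈ vs, f v := by
  classical
  obtain ⟨h1, h2, h3, h4⟩ := hg
  set C : ℕ → Finset ℕ := fun w => insert w (vs.filter (fun u => G.Adj w u)) with hC
  have hCsub : ∀ w ∈ lv, C w ⊆ vs := by
    intro w hw z hz
    rcases Finset.mem_insert.1 hz with rfl | hz
    · exact h2 hw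
    · exact (Finset.mem_filter.1 hz).1
  have hdisj : (lv : Set ℕ).PairwiseDisjoint C := by
    intro w hw w' hw' hne
    simp only [Function.onFun]
    rw [Finset.disjoint_left]
    intro z hz hz'
    have hzvs : z ∈ vs := hCsub w hw hz
    have hzw : z = w ∨ G.Adj w z := by
      rcases Finset.mem_insert.1 hz with rfl | hz
      · exact Or.inl rfl
      · exact Or.inr (Finset.mem_filter.1 hz).2
    have hzw' : z = w' ∨ G.Adj w' z := by
      rcases Finset.mem_insert.1 hz' with rfl | hz'
      · exact Or.inl rfl
      · exact Or.inr (Finset.mem_filter.1 hz').2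
    obtain ⟨y, -, huniq⟩ := h3 z hzvs
    exact hne ((huniq w ⟨hw, hzw⟩).trans (huniq w' ⟨hw', hzw'⟩).symm)
  have hterm : ∀ w ∈ lv, 2 ≤ ∑ z ∈ C w, f z := by
    intro w hw
    have hnot : w ∉ vs.filter (fun u => G.Adj w u) := by
      intro hmem
      exact (G.irrefl) (Finset.mem_filter.1 hmem).2
    rw [hC, Finset.sum_insert hnot]
    have := good_sum ⟨h1, h2, h3, h4⟩ f hf w hw
    convert this using 2
  calc 2 * lv.card = ∑ _w ∈ lv, 2 := by
        rw [Finset.sum_const, smul_eq_mul, mul_comm]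
    _ ≤ ∑ w ∈ lv, ∑ z ∈ C w, f z := Finset.sum_le_sum hterm
    _ = ∑ z ∈ lv.biUnion C, f z := (Finset.sum_biUnion hdisj).symm
    _ ≤ ∑ v ∈ vs, f v := by
        apply Finset.sum_le_sum_of_subset
        exact Finset.biUnion_subset.2 hCsub

open Classical in
/-- For a tree T in the family 𝓕, the closed neighborhoods of the vertices of LV(T)
partition V(T), every RIDF f satisfies Σ_{x ∈ N[v]} f(x) ≥ 2 for each v ∈ LV(T), and
hence γ_{rI}(T) ≥ 2 |LV(T)|. -/
theorem closed_nbhd_partition (G : SimpleGraph ℕ) (vs lv : Finset ℕ) (h : InF G vs lv) :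
    (∀ v ∈ vs, ∃! w, w ∈ lv ∧ (v = w ∨ G.Adj w v)) ∧
    (∀ f : ℕ → ℕ, IsRIDFOn G vs f → ∀ w ∈ lv,
      2 ≤ f w + ∑ u ∈ vs.filter (fun u => G.Adj w u), f u) ∧
    2 * lv.card ≤ ridnOn G vs := by
  have hg := good_of_inF h
  refine ⟨hg.2.2.1, fun f hf => good_sum hg f hf, ?_⟩
  have hne : {n | ∃ f : ℕ → ℕ, IsRIDFOn G vs f ∧ ∑ v ∈ vs, f v = n}.Nonempty := by
    refine ⟨∑ v ∈ vs, (fun _ => 2) v, fun _ => 2, ⟨?_, ?_, ?_⟩, rfl⟩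
    · intro v _; exact le_refl 2
    · intro v _ h0; exact absurd h0 (by norm_num)
    · intro v _ h0; exact absurd h0 (by norm_num)
  obtain ⟨f, hf, hsum⟩ := Nat.sInf_mem hne
  rw [ridnOn, ← hsum]
  exact good_bound hg f hf
end

section
/- Let T be a tree with γ_{rI}(T) = 2γ_r(T) and diameter at least 4, let x_0 x_1 ⋯ x_d be a diametral path chosen to maximize deg(x_{d-1}), and let D be a minimum restrained dominating set of T. Then x_{d-1} ∉ D and deg_T(x_{d-1}) = 2. -/
open SimpleGraph Finset

variable {V : Type*} [Fintype V]

/-- D is a restrained dominating set of G. -/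
def IsRDS (G : SimpleGraph V) (D : Set V) : Prop :=
  ∀ v, v ∉ D → (∃ u ∈ D, G.Adj v u) ∧ ∃ u, u ∉ D ∧ G.Adj v u

/-- The restrained domination number γ_r(G). -/
noncomputable def rdn (G : SimpleGraph V) : ℕ :=
  sInf {n | ∃ D : Set V, IsRDS G D ∧ D.ncard = n}

open Classical in
/-- f is a restrained Italian dominating function on G. -/
def IsRIDF (G : SimpleGraph V) (f : V → ℕ) : Prop :=
  (∀ v, f v ≤ 2) ∧
  (∀ v, f v = 0 → 2 ≤ ∑ u ∈ Finset.univ.filter (fun u => G.Adj v u), f u) ∧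
  (∀ v, f v = 0 → ∃ u, G.Adj v u ∧ f u = 0)

/-- The restrained Italian domination number γ_{rI}(G). -/
noncomputable def ridn (G : SimpleGraph V) : ℕ :=
  sInf {n | ∃ f : V → ℕ, IsRIDF G f ∧ ∑ v, f v = n}


section Aux
variable {V : Type*} {G : SimpleGraph V}

lemma exists_walk_ofFn : ∀ (n : ℕ) (y : Fin (n+1) → V),
    (∀ i : Fin n, G.Adj (y i.castSucc) (y i.succ)) →
    ∃ p : G.Walk (y 0) (y (Fin.last n)), p.length = n ∧ p.support = List.ofFn y
  | 0, y, _ => ⟨SimpleGraph.Walk.nil, rfl, by simp⟩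
  | n+1, y, h => by
    obtain ⟨p, hl, hs⟩ := exists_walk_ofFn n (fun i => y i.succ) (fun i => by
      exact h i.succ)
    have h0 : G.Adj (y 0) (y (0 : Fin (n+1)).succ) := by simpa using h 0
    exact ⟨SimpleGraph.Walk.cons h0 p, by rw [SimpleGraph.Walk.length_cons, hl], by
      rw [SimpleGraph.Walk.support_cons, hs, List.ofFn_succ (f := y)]⟩

lemma exists_path_ofFn (n : ℕ) (y : Fin (n+1) → V) (hinj : Function.Injective y)
    (hadj : ∀ i : Fin n, G.Adj (y i.castSucc) (y i.succ)) :
    ∃ p : G.Walk (y 0) (y (Fin.last n)), p.IsPath ∧ p.length = n := by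
  obtain ⟨p, hl, hs⟩ := exists_walk_ofFn n y hadj
  exact ⟨p, by rw [SimpleGraph.Walk.isPath_def, hs]; exact List.nodup_ofFn.2 hinj, hl⟩

lemma path_length_le_dist (hT : G.IsAcyclic) {u v : V} (p : G.Walk u v) (hp : p.IsPath) :
    p.length ≤ G.dist u v := by
  classical
  obtain ⟨q, hq⟩ := SimpleGraph.Reachable.exists_walk_length_eq_dist ⟨p⟩
  have huniq := hT.path_unique ⟨p, hp⟩ ⟨q.bypass, q.bypass_isPath⟩
  have hpl : p.length = q.bypass.length := congrArg (fun r : G.Path u v => r.1.length) huniq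
  calc p.length = q.bypass.length := hpl
    _ ≤ q.length := q.length_bypass_le
    _ = G.dist u v := hq

lemma path_length_eq (hT : G.IsAcyclic) {u v : V} (p q : G.Walk u v)
    (hp : p.IsPath) (hq : q.IsPath) : p.length = q.length :=
  congrArg (fun r : G.Path u v => r.1.length) (hT.path_unique ⟨p, hp⟩ ⟨q, hq⟩)

/-- On a path in an acyclic graph, adjacent vertices are consecutive. -/
lemma consec (hac : G.IsAcyclic) {n : ℕ} (y : Fin (n+1) → V) (hinj : Function.Injective y)
    (hadj : ∀ i : Fin n, G.Adj (y i.castSucc) (y i.succ)) (i j : Fin (n+1))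
    (hlt : (i:ℕ) < (j:ℕ)) (h : G.Adj (y i) (y j)) : (j:ℕ) = (i:ℕ) + 1 := by
  have hadj' : ∀ (t : ℕ) (ht : t < n), G.Adj (y ⟨t, by omega⟩) (y ⟨t+1, by omega⟩) :=
    fun t ht => hadj ⟨t, ht⟩
  set m := (j:ℕ) - (i:ℕ) with hm
  have hjn := j.2
  let z : Fin (m+1) → V := fun t => y ⟨(i:ℕ) + (t:ℕ), by omega⟩
  have hzinj : Function.Injective z := by
    intro s t hst
    have := hinj hst
    simp only [Fin.mk.injEq] at this
    exact Fin.ext (by omega)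
  have hzadj : ∀ t : Fin m, G.Adj (z t.castSucc) (z t.succ) :=
    fun t => hadj' ((i:ℕ) + (t:ℕ)) (by omega)
  obtain ⟨p, hp, hpl⟩ := exists_path_ofFn m z hzinj hzadj
  have hz0 : z 0 = y i := congrArg y (Fin.ext (by simp))
  have hzl : z (Fin.last m) = y j := congrArg y (Fin.ext (by simp; omega))
  have hq : (SimpleGraph.Walk.cons h SimpleGraph.Walk.nil).IsPath := by
    simp [SimpleGraph.Walk.isPath_def]
    intro he
    have := hinj he
    simp [Fin.ext_iff] at this
    omega
  have hlen := path_length_eq hac (p.copy hz0 hzl) (SimpleGraph.Walk.cons h SimpleGraph.Walk.nil)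
    (by simpa using hp) hq
  simp [SimpleGraph.Walk.length_copy, hpl] at hlen
  omega

end Aux

section Aux2
variable {V : Type*} {G : SimpleGraph V}

lemma no_long_path (hT : G.IsAcyclic) {d : ℕ} (hd : G.diam = d) (hd0 : d ≠ 0)
    (y : Fin (d+2) → V) (hinj : Function.Injective y)
    (hadj : ∀ i : Fin (d+1), G.Adj (y i.castSucc) (y i.succ)) : False := by
  obtain ⟨p, hp, hl⟩ := exists_path_ofFn (d+1) y hinj hadj
  have h1 := path_length_le_dist hT p hp
  have h2 : G.dist (y 0) (y (Fin.last (d+1))) ≤ G.diam :=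
    SimpleGraph.dist_le_diam (G.ediam_ne_top_of_diam_ne_zero (by omega))
  omega

lemma noext (hT : G.IsAcyclic) {d : ℕ} (hd : G.diam = d) (hd0 : d ≠ 0)
    (y : Fin (d+1) → V) (hinj : Function.Injective y)
    (hadj : ∀ i : Fin d, G.Adj (y i.castSucc) (y i.succ))
    (w : V) (hw : G.Adj (y (Fin.last d)) w) (hwr : w ∉ Set.range y) : False := by
  classical
  have hadj' : ∀ (t : ℕ) (ht : t < d), G.Adj (y ⟨t, by omega⟩) (y ⟨t+1, by omega⟩) :=
    fun t ht => hadj ⟨t, ht⟩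
  let z : Fin (d+2) → V := fun i => if h : (i:ℕ) < d+1 then y ⟨i, h⟩ else w
  have hz : ∀ (i : Fin (d+2)) (h : (i:ℕ) < d+1), z i = y ⟨i, h⟩ := fun i h => dif_pos h
  have hzw : ∀ (i : Fin (d+2)), (i:ℕ) = d+1 → z i = w := fun i h => dif_neg (by omega)
  apply no_long_path hT hd hd0 z ?_ ?_
  · intro s t hst
    rcases Nat.lt_or_ge (s:ℕ) (d+1) with hs | hs <;> rcases Nat.lt_or_ge (t:ℕ) (d+1) with ht | ht
    · rw [hz s hs, hz t ht] at hst
      have := hinj hst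
      simp only [Fin.mk.injEq] at this
      exact Fin.ext (by omega)
    · exfalso; rw [hz s hs, hzw t (by omega)] at hst; exact hwr ⟨_, hst⟩
    · exfalso; rw [hzw s (by omega), hz t ht] at hst; exact hwr ⟨_, hst.symm⟩
    · exact Fin.ext (by omega)
  · intro i
    rcases Nat.lt_or_ge (i:ℕ) d with hi | hi
    · rw [hz i.castSucc (by simpa using i.isLt), hz i.succ (by simp [Fin.val_succ]; omega)]
      exact hadj' i (by omega)
    · have hieq : (i:ℕ) = d := by omega
      rw [hz i.castSucc (by simpa using i.isLt), hzw i.succ (by simp [Fin.val_succ]; omega)]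
      convert hw using 2
      exact Fin.ext (by simp [hieq])

end Aux2

/-- Let T be a tree with γ_{rI}(T) = 2 γ_r(T) and diameter d ≥ 4, let x₀x₁⋯x_d be a
diametral path chosen among all diametral paths to maximize the degree of x_{d-1}, and
let D be a minimum restrained dominating set. Then x_{d-1} ∉ D and deg(x_{d-1}) = 2. -/
theorem diametral_path_property (G : SimpleGraph V) [DecidableRel G.Adj] (hT : G.IsTree)
    (d : ℕ) (hd : d = G.diam) (hd4 : 4 ≤ d)
    (x : Fin (d + 1) → V) (hinj : Function.Injective x)
    (hadj : ∀ i : Fin d, G.Adj (x i.castSucc) (x i.succ))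
    (hmax : ∀ y : Fin (d + 1) → V, Function.Injective y →
      (∀ i : Fin d, G.Adj (y i.castSucc) (y i.succ)) →
      G.degree (y ⟨d - 1, by omega⟩) ≤ G.degree (x ⟨d - 1, by omega⟩))
    (hcond : ridn G = 2 * rdn G)
    (D : Set V) (hD : IsRDS G D) (hDcard : D.ncard = rdn G) :
    x ⟨d - 1, by omega⟩ ∉ D ∧ G.degree (x ⟨d - 1, by omega⟩) = 2 := by
  classical
  have hac := hT.2
  have hdiam : G.diam = d := hd.symm
  have hd0 : d ≠ 0 := by omega
  have hadj' : ∀ (t : ℕ) (ht : t < d), G.Adj (x ⟨t, by omega⟩) (x ⟨t+1, by omega⟩) :=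
    fun t ht => hadj ⟨t, ht⟩
  set a : V := x ⟨d - 1, by omega⟩ with ha
  set b : V := x ⟨d, by omega⟩ with hb
  set c : V := x ⟨d - 2, by omega⟩ with hc
  -- consecutive claim
  have hconsec : ∀ i j : Fin (d+1), G.Adj (x i) (x j) → (j:ℕ) = (i:ℕ)+1 ∨ (i:ℕ) = (j:ℕ)+1 := by
    intro i j hij
    rcases lt_trichotomy (i:ℕ) (j:ℕ) with h|h|h
    · exact Or.inl (consec hac x hinj hadj i j h hij)
    · exact absurd (show i = j from Fin.ext h ▸ rfl) (fun he => G.loopless.irrefl _ (he ▸ hij))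
    · exact Or.inr (consec hac x hinj hadj j i h hij.symm)
  -- b is a leaf with support a
  have hleafb : ∀ w, G.Adj b w → w = a := by
    intro w hw
    by_cases hr : w ∈ Set.range x
    · obtain ⟨j, rfl⟩ := hr
      rcases hconsec ⟨d, by omega⟩ j hw with h|h
      · have h2 : (j:ℕ) = d + 1 := by simpa using h
        exact absurd j.2 (by omega)
      · have h2 : d = (j:ℕ) + 1 := by simpa using h
        exact congrArg x (Fin.ext (by simp; omega))
    · exact (noext hac hdiam hd0 x hinj hadj w hw hr).elim
  -- extra neighbors of a (outside range x) are leaves with support a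
  have hextra : ∀ w, G.Adj a w → w ∉ Set.range x → ∀ u, G.Adj w u → u = a := by
    intro w hw hwr
    let y : Fin (d+1) → V := fun i => if h : (i:ℕ) < d then x ⟨i, by omega⟩ else w
    have hyx : ∀ (i : Fin (d+1)) (h : (i:ℕ) < d), y i = x ⟨i, by omega⟩ := fun i h => dif_pos h
    have hyw : ∀ (i : Fin (d+1)), (i:ℕ) = d → y i = w := fun i h => dif_neg (by omega)
    have hyinj : Function.Injective y := by
      intro s t hst
      rcases Nat.lt_or_ge (s:ℕ) d with hs | hs <;> rcases Nat.lt_or_ge (t:ℕ) d with ht | ht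
      · rw [hyx s hs, hyx t ht] at hst
        have := hinj hst
        simp only [Fin.mk.injEq] at this
        exact Fin.ext (by omega)
      · exfalso; rw [hyx s hs, hyw t (by omega)] at hst; exact hwr ⟨_, hst⟩
      · exfalso; rw [hyw s (by omega), hyx t ht] at hst; exact hwr ⟨_, hst.symm⟩
      · exact Fin.ext (by omega)
    have hyadj : ∀ i : Fin d, G.Adj (y i.castSucc) (y i.succ) := by
      intro i
      rcases Nat.lt_or_ge ((i:ℕ)+1) d with hi | hi
      · rw [hyx i.castSucc (by simpa using (by omega : (i:ℕ) < d)),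
            hyx i.succ (by simpa using hi)]
        exact hadj' i (by omega)
      · have hieq : (i:ℕ) = d - 1 := by have := i.2; omega
        rw [hyx i.castSucc (by simpa using (by omega : (i:ℕ) < d)),
            hyw i.succ (by simp [Fin.val_succ]; omega)]
        convert hw using 2
        exact Fin.ext (by simpa using hieq)
    have hwy : w = y (Fin.last d) := (hyw (Fin.last d) (by simp)).symm
    intro u hu
    by_cases hur : u ∈ Set.range y
    · obtain ⟨j, rfl⟩ := hur
      rcases Nat.lt_or_ge (j:ℕ) d with hj | hj
      · have hlt : (j:ℕ) < (Fin.last d : Fin (d+1)).val := by simpa using hj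
        have hadjyl : G.Adj (y j) (y (Fin.last d)) := by rw [← hwy]; exact hu.symm
        have := consec hac y hyinj hyadj j (Fin.last d) hlt hadjyl
        simp only [Fin.val_last] at this
        rw [hyx j hj]
        rw [ha]
        exact congrArg x (Fin.ext (by simp; omega))
      · exfalso
        have : (j:ℕ) = d := by have := j.2; omega
        rw [hyw j this] at hu
        exact G.loopless.irrefl w hu
    · rw [hwy] at hu
      exact (noext hac hdiam hd0 y hyinj hyadj u hu hur).elim
  -- basic adjacencies
  have hadjab : G.Adj a b := by
    have h := hadj' (d-1) (by omega)
    rw [ha, hb]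
    convert h using 2
    exact Fin.ext (by simp; omega)
  have hadjac : G.Adj a c := by
    have h := hadj' (d-2) (by omega)
    rw [ha, hc]
    have h2 : (⟨d-2+1, by omega⟩ : Fin (d+1)) = ⟨d-1, by omega⟩ := Fin.ext (by simp; omega)
    rw [h2] at h
    exact h.symm
  -- every leaf-type vertex is in D
  have hbD : b ∈ D := by
    by_contra hbD
    obtain ⟨⟨u, huD, hvu⟩, ⟨u', hu'D, hvu'⟩⟩ := hD b hbD
    rw [hleafb u hvu] at huD
    rw [hleafb u' hvu'] at hu'D
    exact hu'D huD
  -- the canonical RIDF f = 2 on D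
  let f : V → ℕ := fun v => if v ∈ D then 2 else 0
  have hf2 : ∀ v ∈ D, f v = 2 := fun v hv => if_pos hv
  have hf0 : ∀ v, v ∉ D → f v = 0 := fun v hv => if_neg hv
  have hfle : ∀ v, f v ≤ 2 := by intro v; by_cases h : v ∈ D <;> simp [f, h]
  have hfD : ∀ v, f v = 0 → v ∉ D := by
    intro v h hv
    rw [hf2 v hv] at h
    omega
  have hfsum : ∑ v, f v = 2 * D.ncard := by
    have h1 : ∑ v, f v = ∑ v ∈ Finset.univ.filter (· ∈ D), 2 := (Finset.sum_filter _ _).symm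
    rw [h1, Finset.sum_const, smul_eq_mul, mul_comm]
    congr 1
    rw [Set.ncard_eq_toFinset_card']
    congr 1
    ext v
    simp
  have hridf : IsRIDF G f := by
    refine ⟨hfle, fun v hv => ?_, fun v hv => ?_⟩
    · obtain ⟨⟨u, huD, hvu⟩, _⟩ := hD v (hfD v hv)
      rw [Finset.filter_congr_decidable]
      calc 2 = f u := (hf2 u huD).symm
        _ ≤ _ := Finset.single_le_sum (fun i _ => Nat.zero_le _)
            (Finset.mem_filter.2 ⟨Finset.mem_univ _, hvu⟩)
    · obtain ⟨_, ⟨u', hu'D, hvu'⟩⟩ := hD v (hfD v hv)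
      exact ⟨u', hvu', hf0 u' hu'D⟩
  have hridn_le : ∀ g : V → ℕ, IsRIDF G g → ridn G ≤ ∑ v, g v :=
    fun g hg => Nat.sInf_le ⟨g, hg, rfl⟩
  -- sum after an update to value 1 at a vertex of value 2
  have hupd : ∀ (g : V → ℕ) (v : V), g v = 2 →
      (∑ u, Function.update g v 1 u) + 1 = ∑ u, g u := by
    intro g v hg
    rw [← Finset.add_sum_erase _ (Function.update g v 1) (Finset.mem_univ v),
        ← Finset.add_sum_erase _ g (Finset.mem_univ v), hg, Function.update_self]
    have he : ∑ u ∈ Finset.univ.erase v, Function.update g v 1 u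
        = ∑ u ∈ Finset.univ.erase v, g u :=
      Finset.sum_congr rfl fun u hu =>
        Function.update_of_ne (Finset.ne_of_mem_erase hu) _ _
    rw [he]
    omega
  -- Part 1 : a ∉ D
  have haD : a ∉ D := by
    intro haD
    set f' := Function.update f b 1 with hf'
    have hsum' : (∑ v, f' v) + 1 = ∑ v, f v := hupd f b (hf2 b hbD)
    have hridf' : IsRIDF G f' := by
      refine ⟨?_, ?_, ?_⟩
      · intro v
        by_cases hvb : v = b
        · subst hvb; simp [hf', Function.update_self]
        · rw [hf', Function.update_of_ne hvb]; exact hfle v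
      · intro v hv
        have hvb : v ≠ b := by
          intro h; subst h; simp [hf', Function.update_self] at hv
        rw [hf', Function.update_of_ne hvb] at hv
        have hvD := hfD v hv
        obtain ⟨⟨u, huD, hvu⟩, _⟩ := hD v hvD
        have hub : u ≠ b := by
          intro h
          subst h
          exact hvD ((hleafb v hvu.symm) ▸ haD)
        rw [Finset.filter_congr_decidable]
        calc 2 = f' u := by rw [hf', Function.update_of_ne hub]; exact (hf2 u huD).symm
          _ ≤ _ := Finset.single_le_sum (fun i _ => Nat.zero_le _)
              (Finset.mem_filter.2 ⟨Finset.mem_univ _, hvu⟩)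
      · intro v hv
        have hvb : v ≠ b := by
          intro h; subst h; simp [hf', Function.update_self] at hv
        rw [hf', Function.update_of_ne hvb] at hv
        obtain ⟨_, ⟨u', hu'D, hvu'⟩⟩ := hD v (hfD v hv)
        have hu'b : u' ≠ b := fun h => hu'D (h ▸ hbD)
        exact ⟨u', hvu', by rw [hf', Function.update_of_ne hu'b]; exact hf0 u' hu'D⟩
    have hle := hridn_le f' hridf'
    omega
  -- Part 2 : degree a = 2
  have hcb : c ≠ b := by
    intro h
    have := hinj h
    simp only [Fin.mk.injEq] at this
    omega
  have hpair : ({c, b} : Finset V) ⊆ G.neighborFinset a := by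
    intro v hv
    rcases Finset.mem_insert.1 hv with rfl | hv
    · exact (G.mem_neighborFinset _ _).2 hadjac
    · rw [Finset.mem_singleton] at hv
      subst hv
      exact (G.mem_neighborFinset _ _).2 hadjab
  have hdeg : G.degree a = (G.neighborFinset a).card := rfl
  have hge : 2 ≤ G.degree a := by
    have h1 := Finset.card_le_card hpair
    rwa [Finset.card_pair hcb] at h1
  have hle2 : G.degree a ≤ 2 := by
    by_contra hgt
    push_neg at hgt
    have hnsub : ¬ (G.neighborFinset a ⊆ {c, b}) := by
      intro hsub
      have h1 := Finset.card_le_card hsub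
      rw [Finset.card_pair hcb] at h1
      omega
    obtain ⟨w, hwN, hwcb⟩ := Finset.not_subset.1 hnsub
    have hw : G.Adj a w := (G.mem_neighborFinset _ _).1 hwN
    have hwc : w ≠ c := fun h => hwcb (by simp [h])
    have hwb : w ≠ b := fun h => hwcb (by simp [h])
    have hwr : w ∉ Set.range x := by
      rintro ⟨j, rfl⟩
      rcases hconsec ⟨d-1, by omega⟩ j hw with h|h
      · have h2 : (j:ℕ) = d - 1 + 1 := by simpa using h
        exact hwb (congrArg x (Fin.ext (by simp; omega)))
      · have h2 : d - 1 = (j:ℕ) + 1 := by simpa using h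
        exact hwc (congrArg x (Fin.ext (by simp; omega)))
    have hwleaf := hextra w hw hwr
    have hwD : w ∈ D := by
      by_contra hwD
      obtain ⟨⟨u, huD, hvu⟩, _⟩ := hD w hwD
      rw [hwleaf u hvu] at huD
      exact haD huD
    -- double update
    set g1 := Function.update f b 1 with hg1
    set g := Function.update g1 w 1 with hg
    have hsum1 : (∑ v, g1 v) + 1 = ∑ v, f v := hupd f b (hf2 b hbD)
    have hg1w : g1 w = 2 := by
      rw [hg1, Function.update_of_ne hwb]; exact hf2 w hwD
    have hsum2 : (∑ v, g v) + 1 = ∑ v, g1 v := hupd g1 w hg1w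
    have hgb : g b = 1 := by
      rw [hg, Function.update_of_ne (Ne.symm hwb), hg1, Function.update_self]
    have hgw : g w = 1 := by rw [hg, Function.update_self]
    have hgoth : ∀ v, v ≠ b → v ≠ w → g v = f v := fun v h1 h2 => by
      rw [hg, Function.update_of_ne h2, hg1, Function.update_of_ne h1]
    have hridfg : IsRIDF G g := by
      refine ⟨?_, ?_, ?_⟩
      · intro v
        by_cases h1 : v = b
        · subst h1; omega
        · by_cases h2 : v = w
          · subst h2; omega
          · rw [hgoth v h1 h2]; exact hfle v
      · intro v hv
        have hvb : v ≠ b := fun h => by subst h; omega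
        have hvw : v ≠ w := fun h => by subst h; omega
        rw [hgoth v hvb hvw] at hv
        have hvD := hfD v hv
        rw [Finset.filter_congr_decidable]
        by_cases hva : v = a
        · subst hva
          have hsub : ({b, w} : Finset V) ⊆ Finset.univ.filter (fun u => G.Adj a u) := by
            intro z hz
            rcases Finset.mem_insert.1 hz with rfl | hz
            · exact Finset.mem_filter.2 ⟨Finset.mem_univ _, hadjab⟩
            · rw [Finset.mem_singleton] at hz
              subst hz
              exact Finset.mem_filter.2 ⟨Finset.mem_univ _, hw⟩
          calc 2 = ∑ u ∈ ({b, w} : Finset V), g u := by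
                rw [Finset.sum_pair (Ne.symm hwb), hgb, hgw]
            _ ≤ _ := Finset.sum_le_sum_of_subset hsub
        · obtain ⟨⟨u, huD, hvu⟩, _⟩ := hD v hvD
          have hub : u ≠ b := fun h => hva (hleafb v (h ▸ hvu).symm)
          have huw : u ≠ w := fun h => hva (hwleaf v (h ▸ hvu).symm)
          calc 2 = g u := by rw [hgoth u hub huw]; exact (hf2 u huD).symm
            _ ≤ _ := Finset.single_le_sum (fun i _ => Nat.zero_le _)
                (Finset.mem_filter.2 ⟨Finset.mem_univ _, hvu⟩)
      · intro v hv
        have hvb : v ≠ b := fun h => by subst h; omega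
        have hvw : v ≠ w := fun h => by subst h; omega
        rw [hgoth v hvb hvw] at hv
        obtain ⟨_, ⟨u', hu'D, hvu'⟩⟩ := hD v (hfD v hv)
        have h1 : u' ≠ b := fun h => hu'D (h ▸ hbD)
        have h2 : u' ≠ w := fun h => hu'D (h ▸ hwD)
        exact ⟨u', hvu', by rw [hgoth u' h1 h2]; exact hf0 u' hu'D⟩
    have hle := hridn_le g hridfg
    omega
  exact ⟨haD, le_antisymm hle2 hge⟩
end

section
/- Let T be a tree in the family F built by operations O1 and O2. Then every vertex of V(T) ∖ LV(T) is adjacent to at least one vertex of V(T) ∖ LV(T) and to exactly one vertex of LV(T). -/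
open SimpleGraph Finset

lemma InF_lv_subset {G : SimpleGraph ℕ} {vs lv : Finset ℕ} (h : InF G vs lv) : lv ⊆ vs := by
  induction h with
  | base a b c d hab hac had hbc hbd hcd =>
      intro y hy; simp only [Finset.mem_insert, Finset.mem_singleton] at hy ⊢; tauto
  | o1 G vs lv x u v w hG hx hu hv hw huv huw hvw ih =>
      intro y hy
      simp only [Finset.mem_union, Finset.mem_insert, Finset.mem_singleton] at hy ⊢
      rcases hy with hy | hy
      · exact Or.inl (ih hy)
      · tauto
  | o2 G vs lv x t u mid lf ht hG hx hu hmid hlf hinj ih =>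
      intro y hy
      simp only [Finset.mem_union, Finset.mem_singleton] at hy ⊢
      rcases hy with hy | hy
      · exact Or.inl (ih hy)
      · exact Or.inr (Or.inr hy)

lemma InF_adj_mem {G : SimpleGraph ℕ} {vs lv : Finset ℕ} (h : InF G vs lv) :
    ∀ a b, G.Adj a b → a ∈ vs ∧ b ∈ vs := by
  induction h with
  | base a b c d hab hac had hbc hbd hcd =>
      intro p q hpq
      simp only [SimpleGraph.fromEdgeSet_adj, Set.mem_insert_iff, Set.mem_singleton_iff,
        Sym2.eq_iff] at hpq
      simp only [Finset.mem_insert, Finset.mem_singleton]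
      obtain ⟨h1, -⟩ := hpq
      rcases h1 with (⟨h,h'⟩|⟨h,h'⟩) | (⟨h,h'⟩|⟨h,h'⟩) | (⟨h,h'⟩|⟨h,h'⟩) <;> subst h <;> subst h' <;> tauto
  | o1 G vs lv x u v w hG hx hu hv hw huv huw hvw ih =>
      intro p q hpq
      have hxvs : x ∈ vs := InF_lv_subset hG hx
      simp only [sup_adj, SimpleGraph.fromEdgeSet_adj, Set.mem_insert_iff,
        Set.mem_singleton_iff, Sym2.eq_iff] at hpq
      simp only [Finset.mem_union, Finset.mem_insert, Finset.mem_singleton]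
      rcases hpq with h | ⟨h1, -⟩
      · obtain ⟨h, h'⟩ := ih p q h; tauto
      · rcases h1 with (⟨h,h'⟩|⟨h,h'⟩) | (⟨h,h'⟩|⟨h,h'⟩) | (⟨h,h'⟩|⟨h,h'⟩) <;>
          subst h <;> subst h' <;> tauto
  | o2 G vs lv x t u mid lf ht hG hx hu hmid hlf hinj ih =>
      intro p q hpq
      have hxvs : x ∈ vs := InF_lv_subset hG hx
      simp only [sup_adj, SimpleGraph.fromEdgeSet_adj, Set.mem_union, Set.mem_singleton_iff,
        Set.mem_iUnion, Set.mem_insert_iff, Sym2.eq_iff] at hpq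
      simp only [Finset.mem_union, Finset.mem_singleton, Finset.mem_image,
        Finset.mem_univ, true_and]
      rcases hpq with h | ⟨h1, -⟩
      · obtain ⟨h, h'⟩ := ih p q h; tauto
      · rcases h1 with (⟨h,h'⟩|⟨h,h'⟩) | ⟨i, (⟨h,h'⟩|⟨h,h'⟩) | (⟨h,h'⟩|⟨h,h'⟩)⟩ <;>
          subst h <;> subst h' <;>
          refine ⟨?_, ?_⟩ <;> first
            | exact Or.inl hxvs
            | exact Or.inr (Or.inl (Or.inl rfl))
            | exact Or.inr (Or.inl (Or.inr ⟨i, rfl⟩))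
            | exact Or.inr (Or.inr ⟨i, rfl⟩)

/-- For a tree T in the family 𝓕, every vertex of V(T) ∖ LV(T) is adjacent to at least
one vertex of V(T) ∖ LV(T) and to exactly one vertex of LV(T). -/
theorem outside_lv_adjacency (G : SimpleGraph ℕ) (vs lv : Finset ℕ) (h : InF G vs lv) :
    ∀ v ∈ vs, v ∉ lv →
      (∃ u ∈ vs, u ∉ lv ∧ G.Adj v u) ∧ ∃! u, u ∈ lv ∧ G.Adj v u := by
  induction h with
  | base a b c d hab hac had hbc hbd hcd =>
      intro y hy hylv
      simp only [Finset.mem_insert, Finset.mem_singleton] at hy hylv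
      push_neg at hylv
      obtain ⟨hya, hyd⟩ := hylv
      rcases hy with rfl | rfl | rfl | rfl
      · exact absurd rfl hya
      · -- y = b
        refine ⟨⟨c, ?_, ?_, ?_⟩, a, ⟨?_, ?_⟩, ?_⟩
        · simp
        · simp only [Finset.mem_insert, Finset.mem_singleton]; omega
        · simp only [SimpleGraph.fromEdgeSet_adj, Set.mem_insert_iff, Set.mem_singleton_iff,
            Sym2.eq_iff, true_and, and_true, true_or, or_true] <;> omega
        · simp
        · simp only [SimpleGraph.fromEdgeSet_adj, Set.mem_insert_iff, Set.mem_singleton_iff,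
            Sym2.eq_iff, true_and, and_true, true_or, or_true] <;> omega
        · rintro z ⟨hz, hadj⟩
          simp only [Finset.mem_insert, Finset.mem_singleton] at hz
          simp only [SimpleGraph.fromEdgeSet_adj, Set.mem_insert_iff, Set.mem_singleton_iff,
            Sym2.eq_iff, true_and, and_true, true_or, or_true] at hadj
          omega
      · -- y = c
        refine ⟨⟨b, ?_, ?_, ?_⟩, d, ⟨?_, ?_⟩, ?_⟩
        · simp
        · simp only [Finset.mem_insert, Finset.mem_singleton]; omega
        · simp only [SimpleGraph.fromEdgeSet_adj, Set.mem_insert_iff, Set.mem_singleton_iff,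
            Sym2.eq_iff, true_and, and_true, true_or, or_true] <;> omega
        · simp
        · simp only [SimpleGraph.fromEdgeSet_adj, Set.mem_insert_iff, Set.mem_singleton_iff,
            Sym2.eq_iff, true_and, and_true, true_or, or_true] <;> omega
        · rintro z ⟨hz, hadj⟩
          simp only [Finset.mem_insert, Finset.mem_singleton] at hz
          simp only [SimpleGraph.fromEdgeSet_adj, Set.mem_insert_iff, Set.mem_singleton_iff,
            Sym2.eq_iff, true_and, and_true, true_or, or_true] at hadj
          omega
      · exact absurd rfl hyd
  | o1 G vs lv x u v w hG hx hu hv hw huv huw hvw ih =>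
      intro y hy hylv
      have hxvs : x ∈ vs := InF_lv_subset hG hx
      have hlvsub := InF_lv_subset hG
      have hxu : x ≠ u := fun h => hu (h ▸ hxvs)
      have hxv : x ≠ v := fun h => hv (h ▸ hxvs)
      have hxw : x ≠ w := fun h => hw (h ▸ hxvs)
      simp only [Finset.mem_union, Finset.mem_insert, Finset.mem_singleton] at hy hylv
      push_neg at hylv
      obtain ⟨hylv1, hyw⟩ := hylv
      rcases hy with hyvs | rfl | rfl | rfl
      · -- old vertex
        obtain ⟨⟨p, hpvs, hplv, hpadj⟩, q, ⟨hqlv, hqadj⟩, huniq⟩ := ih y hyvs hylv1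
        have hyx : y ≠ x := fun h => hylv1 (h ▸ hx)
        have hyu : y ≠ u := fun h => hu (h ▸ hyvs)
        have hyv : y ≠ v := fun h => hv (h ▸ hyvs)
        have hyw' : y ≠ w := fun h => hw (h ▸ hyvs)
        have hHy : ∀ z, ¬ (SimpleGraph.fromEdgeSet {s(x,u), s(u,v), s(v,w)}).Adj y z := by
          intro z hz
          simp only [SimpleGraph.fromEdgeSet_adj, Set.mem_insert_iff, Set.mem_singleton_iff,
            Sym2.eq_iff, true_and, and_true, true_or, or_true] at hz
          omega
        constructor
        · refine ⟨p, Finset.mem_union_left _ hpvs, ?_, Or.inl hpadj⟩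
          simp only [Finset.mem_union, Finset.mem_singleton]
          push_neg
          exact ⟨hplv, fun h => hw (h ▸ hpvs)⟩
        · refine ⟨q, ⟨Finset.mem_union_left _ hqlv, Or.inl hqadj⟩, ?_⟩
          rintro z ⟨hzlv, hzadj⟩
          simp only [Finset.mem_union, Finset.mem_singleton] at hzlv
          rcases hzadj with hzadj | hzadj
          · rcases hzlv with hzlv | rfl
            · exact huniq z ⟨hzlv, hzadj⟩
            · exact absurd (InF_adj_mem hG y z hzadj).2 hw
          · exact absurd hzadj (hHy z)
      · -- y = u (the variable u has been substituted away; it is now y)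
        constructor
        · refine ⟨v, ?_, ?_, Or.inr ?_⟩
          · simp
          · simp only [Finset.mem_union, Finset.mem_singleton]
            push_neg
            exact ⟨fun h => hv (hlvsub h), hvw⟩
          · simp only [SimpleGraph.fromEdgeSet_adj, Set.mem_insert_iff, Set.mem_singleton_iff,
              Sym2.eq_iff, true_and, and_true, true_or, or_true] <;> omega
        · refine ⟨x, ⟨Finset.mem_union_left _ hx, Or.inr ?_⟩, ?_⟩
          · simp only [SimpleGraph.fromEdgeSet_adj, Set.mem_insert_iff, Set.mem_singleton_iff,
              Sym2.eq_iff, true_and, and_true, true_or, or_true] <;> omega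
          · rintro z ⟨hzlv, hzadj⟩
            simp only [Finset.mem_union, Finset.mem_singleton] at hzlv
            rcases hzadj with hzadj | hzadj
            · exact absurd (InF_adj_mem hG y z hzadj).1 hu
            · simp only [SimpleGraph.fromEdgeSet_adj, Set.mem_insert_iff, Set.mem_singleton_iff,
                Sym2.eq_iff, true_and, and_true, true_or, or_true] at hzadj
              rcases hzlv with hzlv | rfl
              · have hz1 : z ≠ y := fun h => hu (h ▸ hlvsub hzlv)
                have hz2 : z ≠ v := fun h => hv (h ▸ hlvsub hzlv)
                have hz3 : z ≠ w := fun h => hw (h ▸ hlvsub hzlv)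
                omega
              · omega
      · -- y = v (the variable v has been substituted away; it is now y)
        constructor
        · refine ⟨u, ?_, ?_, Or.inr ?_⟩
          · simp
          · simp only [Finset.mem_union, Finset.mem_singleton]
            push_neg
            exact ⟨fun h => hu (hlvsub h), huw⟩
          · simp only [SimpleGraph.fromEdgeSet_adj, Set.mem_insert_iff, Set.mem_singleton_iff,
              Sym2.eq_iff, true_and, and_true, true_or, or_true] <;> omega
        · refine ⟨w, ⟨Finset.mem_union_right _ (Finset.mem_singleton_self w), Or.inr ?_⟩, ?_⟩
          · simp only [SimpleGraph.fromEdgeSet_adj, Set.mem_insert_iff, Set.mem_singleton_iff,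
              Sym2.eq_iff, true_and, and_true, true_or, or_true] <;> omega
          · rintro z ⟨hzlv, hzadj⟩
            simp only [Finset.mem_union, Finset.mem_singleton] at hzlv
            rcases hzadj with hzadj | hzadj
            · exact absurd (InF_adj_mem hG y z hzadj).1 hv
            · simp only [SimpleGraph.fromEdgeSet_adj, Set.mem_insert_iff, Set.mem_singleton_iff,
                Sym2.eq_iff, true_and, and_true, true_or, or_true] at hzadj
              rcases hzlv with hzlv | rfl
              · have hz1 : z ≠ u := fun h => hu (h ▸ hlvsub hzlv)
                have hz2 : z ≠ y := fun h => hv (h ▸ hlvsub hzlv)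
                omega
              · rfl
      · exact absurd rfl hyw
  | o2 G vs lv x t u mid lf ht hG hx hu hmid hlf hinj ih =>
      intro y hy hylv
      have hxvs : x ∈ vs := InF_lv_subset hG hx
      have hlvsub := InF_lv_subset hG
      have hxu : x ≠ u := fun h => hu (h ▸ hxvs)
      have hxm : ∀ i, x ≠ mid i := fun i h => hmid i (h ▸ hxvs)
      have hxl : ∀ i, x ≠ lf i := fun i h => hlf i (h ▸ hxvs)
      have hml : ∀ i j, mid i ≠ lf j := fun i j h => by
        simpa using hinj (a₁ := Sum.inl i) (a₂ := Sum.inr (Sum.inl j)) h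
      have hmu : ∀ i, mid i ≠ u := fun i h => by
        simpa using hinj (a₁ := Sum.inl i) (a₂ := Sum.inr (Sum.inr ())) h
      have hlu : ∀ i, lf i ≠ u := fun i h => by
        simpa using hinj (a₁ := Sum.inr (Sum.inl i)) (a₂ := Sum.inr (Sum.inr ())) h
      have hminj : ∀ i j, mid i = mid j → i = j := fun i j h => by
        simpa using hinj (a₁ := Sum.inl i) (a₂ := Sum.inl j) h
      have hlinj : ∀ i j, lf i = lf j → i = j := fun i j h => by
        simpa using hinj (a₁ := Sum.inr (Sum.inl i)) (a₂ := Sum.inr (Sum.inl j)) h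
      simp only [Finset.mem_union, Finset.mem_singleton, Finset.mem_image, Finset.mem_univ,
        true_and] at hy hylv
      push_neg at hylv
      obtain ⟨hylv1, hyl2⟩ := hylv
      rcases hy with hyvs | (rfl | ⟨i, rfl⟩) | ⟨i, rfl⟩
      · -- old vertex
        obtain ⟨⟨p, hpvs, hplv, hpadj⟩, q, ⟨hqlv, hqadj⟩, huniq⟩ := ih y hyvs hylv1
        have hyx : y ≠ x := fun h => hylv1 (h ▸ hx)
        have hHy : ∀ z, ¬ (SimpleGraph.fromEdgeSet
            (({s(x, u)} : Set (Sym2 ℕ)) ∪ ⋃ i : Fin t, {s(u, mid i), s(mid i, lf i)})).Adj y z := by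
          intro z hz
          simp only [SimpleGraph.fromEdgeSet_adj, Set.mem_union, Set.mem_singleton_iff,
            Set.mem_iUnion, Set.mem_insert_iff, Sym2.eq_iff] at hz
          obtain ⟨h1, -⟩ := hz
          rcases h1 with (⟨h,-⟩|⟨h,-⟩) | ⟨i, ((⟨h,-⟩|⟨h,-⟩) | (⟨h,-⟩|⟨h,-⟩))⟩
          · exact hyx h
          · exact hu (h ▸ hyvs)
          · exact hu (h ▸ hyvs)
          · exact hmid i (h ▸ hyvs)
          · exact hmid i (h ▸ hyvs)
          · exact hlf i (h ▸ hyvs)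
        constructor
        · refine ⟨p, Finset.mem_union_left _ hpvs, ?_, Or.inl hpadj⟩
          simp only [Finset.mem_union, Finset.mem_image, Finset.mem_univ, true_and]
          push_neg
          exact ⟨hplv, fun i h => hlf i (h ▸ hpvs)⟩
        · refine ⟨q, ⟨Finset.mem_union_left _ hqlv, Or.inl hqadj⟩, ?_⟩
          rintro z ⟨hzlv, hzadj⟩
          simp only [Finset.mem_union, Finset.mem_image, Finset.mem_univ, true_and] at hzlv
          rcases hzadj with hzadj | hzadj
          · rcases hzlv with hzlv | ⟨i, rfl⟩
            · exact huniq z ⟨hzlv, hzadj⟩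
            · exact absurd (InF_adj_mem hG y _ hzadj).2 (hlf i)
          · exact absurd hzadj (hHy z)
      · -- y = u (the variable u has been substituted away; it is now y)
        have i0 : Fin t := ⟨0, ht⟩
        constructor
        · refine ⟨mid i0, ?_, ?_, Or.inr ?_⟩
          · simp only [Finset.mem_union, Finset.mem_singleton, Finset.mem_image,
              Finset.mem_univ, true_and]
            exact Or.inr (Or.inl (Or.inr ⟨i0, rfl⟩))
          · simp only [Finset.mem_union, Finset.mem_image, Finset.mem_univ, true_and]
            push_neg
            exact ⟨fun h => hmid i0 (hlvsub h), fun j h => hml i0 j h.symm⟩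
          · exact (SimpleGraph.fromEdgeSet_adj _).mpr
              ⟨Set.mem_union_right _ (Set.mem_iUnion.mpr ⟨i0, Set.mem_insert _ _⟩),
                (hmu i0).symm⟩
        · refine ⟨x, ⟨Finset.mem_union_left _ hx, Or.inr
            ((SimpleGraph.fromEdgeSet_adj _).mpr ⟨Set.mem_union_left _ (Set.mem_singleton _), hxu⟩).symm⟩, ?_⟩
          rintro z ⟨hzlv, hzadj⟩
          simp only [Finset.mem_union, Finset.mem_image, Finset.mem_univ, true_and] at hzlv
          rcases hzadj with hzadj | hzadj
          · exact absurd (InF_adj_mem hG y z hzadj).1 hu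
          · simp only [SimpleGraph.fromEdgeSet_adj, Set.mem_union, Set.mem_singleton_iff,
              Set.mem_iUnion, Set.mem_insert_iff, Sym2.eq_iff] at hzadj
            obtain ⟨h1, -⟩ := hzadj
            rcases h1 with (⟨h1,h2⟩|⟨h1,h2⟩) | ⟨i, ((⟨h1,h2⟩|⟨h1,h2⟩) | (⟨h1,h2⟩|⟨h1,h2⟩))⟩
            · exact absurd h1.symm hxu
            · exact h2
            · -- z = mid i
              subst h2
              rcases hzlv with hzlv | ⟨j, hj⟩
              · exact absurd (hlvsub hzlv) (hmid i)
              · exact absurd hj.symm (hml i j)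
            · exact absurd h1.symm (hmu i)
            · exact absurd h1.symm (hmu i)
            · exact absurd h1.symm (hlu i)
      · -- y = mid i
        constructor
        · refine ⟨u, ?_, ?_, Or.inr ?_⟩
          · simp
          · simp only [Finset.mem_union, Finset.mem_image, Finset.mem_univ, true_and]
            push_neg
            exact ⟨fun h => hu (hlvsub h), fun j h => hlu j h⟩
          · exact ((SimpleGraph.fromEdgeSet_adj _).mpr
              ⟨Set.mem_union_right _ (Set.mem_iUnion.mpr ⟨i, Set.mem_insert _ _⟩),
                (hmu i).symm⟩).symm
        · refine ⟨lf i, ⟨?_, Or.inr ?_⟩, ?_⟩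
          · simp only [Finset.mem_union, Finset.mem_image, Finset.mem_univ, true_and]
            exact Or.inr ⟨i, rfl⟩
          · exact (SimpleGraph.fromEdgeSet_adj _).mpr
              ⟨Set.mem_union_right _ (Set.mem_iUnion.mpr
                ⟨i, Set.mem_insert_of_mem _ rfl⟩), hml i i⟩
          · rintro z ⟨hzlv, hzadj⟩
            simp only [Finset.mem_union, Finset.mem_image, Finset.mem_univ, true_and] at hzlv
            rcases hzadj with hzadj | hzadj
            · exact absurd (InF_adj_mem hG _ z hzadj).1 (hmid i)
            · simp only [SimpleGraph.fromEdgeSet_adj, Set.mem_union, Set.mem_singleton_iff,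
                Set.mem_iUnion, Set.mem_insert_iff, Sym2.eq_iff] at hzadj
              obtain ⟨h1, -⟩ := hzadj
              rcases h1 with (⟨h1,h2⟩|⟨h1,h2⟩) | ⟨j, ((⟨h1,h2⟩|⟨h1,h2⟩) | (⟨h1,h2⟩|⟨h1,h2⟩))⟩
              · exact absurd h1 (hxm i).symm
              · exact absurd h1 (hmu i)
              · exact absurd h1 (hmu i)
              · -- mid i = mid j ∧ z = u
                subst h2
                rcases hzlv with hzlv | ⟨k, hk⟩
                · exact absurd (hlvsub hzlv) hu
                · exact absurd hk (hlu k)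
              · -- mid i = mid j ∧ z = lf j
                have : i = j := hminj i j h1
                subst this
                exact h2
              · exact absurd h1 (hml i j)
      · exact absurd rfl (hyl2 i)
end
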